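/- (Lower bound / sharpness) Let n ≥ 2, m ≥ 1, 0 ≤ α < 1, and let f_1 = ⋯ = f_m = χ_{B^n} be the characteristic function of the unit ball of ℝ^n. Then there exist constants C = C(m,n,α) > 0 and R > 0 such that for all x ∈ ℝ^n with |x| ≥ R, S^m_α(f_1,...,f_m)(x) ≥ C |x|^{−(mn−α)}. Consequently S^m_α(χ_{B^n},...,χ_{B^n}) ∉ L^p(ℝ^n) whenever p ≤ n/(mn−α). -/

import Mathlib

open MeasureTheory
open scoped ENNReal NNReal

/-- The `i`-th block in `ℝ^n` of a point of `ℝ^{mn} = (ℝ^n)^m`. -/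
def block {n m : ℕ} (y : EuclideanSpace ℝ (Fin m × Fin n)) (i : Fin m) :
    EuclideanSpace ℝ (Fin n) := WithLp.toLp 2 (fun j => y (i, j))

/-- Total surface measure of the unit sphere in `ℝ^d`: `ω_{d-1} = 2π^{d/2}/Γ(d/2)`. -/
noncomputable def omegaConst (d : ℕ) : ℝ :=
  2 * Real.pi ^ ((d : ℝ) / 2) / Real.Gamma ((d : ℝ) / 2)

/-- The Beta function `B(a,b) = Γ(a)Γ(b)/Γ(a+b)`. -/
noncomputable def betaG (a b : ℝ) : ℝ :=
  Real.Gamma a * Real.Gamma b / Real.Gamma (a + b)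

/-- `S^m_α(f₁,...,f_m)(x) = (2/(ω_{mn-1}B(mn/2,1-α))) sup_{t>0}
∫_{B^{mn}} ∏ᵢ |fᵢ(x-tyᵢ)| (1-|y|²)^{-α} dy`. -/
noncomputable def fracSphMaxSup {n m : ℕ} (α : ℝ)
    (f : Fin m → EuclideanSpace ℝ (Fin n) → ℝ) (x : EuclideanSpace ℝ (Fin n)) : ℝ≥0∞ :=
  ENNReal.ofReal (2 / (omegaConst (m * n) * betaG ((m * n : ℕ) / 2 : ℝ) (1 - α))) *
    ⨆ t > (0 : ℝ),
      ∫⁻ y in Metric.ball (0 : EuclideanSpace ℝ (Fin m × Fin n)) 1,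
        (∏ i, (‖f i (x - t • block y i)‖₊ : ℝ≥0∞)) *
          ENNReal.ofReal ((1 - ‖y‖ ^ 2) ^ (-α))

/-- The characteristic function of the unit ball of `ℝ^n`. -/
noncomputable def chiBall (n : ℕ) : EuclideanSpace ℝ (Fin n) → ℝ :=
  Set.indicator (Metric.ball (0 : EuclideanSpace ℝ (Fin n)) 1) fun _ => (1 : ℝ)

noncomputable def stack (n m : ℕ) (u : EuclideanSpace ℝ (Fin n)) :
    EuclideanSpace ℝ (Fin m × Fin n) := WithLp.toLp 2 (fun p : Fin m × Fin n => u p.2)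

lemma norm_block_le {n m : ℕ} (y : EuclideanSpace ℝ (Fin m × Fin n)) (i : Fin m) :
    ‖block y i‖ ≤ ‖y‖ := by
  rw [EuclideanSpace.norm_eq, EuclideanSpace.norm_eq]
  apply Real.sqrt_le_sqrt
  rw [Fintype.sum_prod_type]
  exact Finset.single_le_sum (f := fun a => ∑ j, ‖y (a, j)‖^2)
    (fun a _ => by positivity) (Finset.mem_univ i)

lemma norm_stack {n m : ℕ} (u : EuclideanSpace ℝ (Fin n)) :
    ‖stack n m u‖ = Real.sqrt m * ‖u‖ := by
  rw [EuclideanSpace.norm_eq, EuclideanSpace.norm_eq, Fintype.sum_prod_type]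
  simp only [stack, Finset.sum_const, Finset.card_univ, Fintype.card_fin, nsmul_eq_mul]
  rw [Real.sqrt_mul (by positivity)]

lemma key_integral {n m : ℕ} (hn : 2 ≤ n) (hm : 1 ≤ m) {α : ℝ} (hα0 : 0 ≤ α)
    (x : EuclideanSpace ℝ (Fin n)) (hx : 1 ≤ ‖x‖) :
    ENNReal.ofReal ((2:ℝ)^(-α) * (8*Real.sqrt m)^(-((m*n:ℕ):ℝ)) *
        (volume (Metric.ball (0:EuclideanSpace ℝ (Fin m × Fin n)) 1)).toReal *
        ‖x‖ ^ (α - ((m*n:ℕ):ℝ))) ≤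
      ∫⁻ y in Metric.ball (0 : EuclideanSpace ℝ (Fin m × Fin n)) 1,
        (∏ i, (‖chiBall n (x - (Real.sqrt m * ‖x‖) • block y i)‖₊ : ℝ≥0∞)) *
          ENNReal.ofReal ((1 - ‖y‖ ^ 2) ^ (-α)) := by
  have hx0 : (0:ℝ) < ‖x‖ := lt_of_lt_of_le one_pos hx
  have hs1 : (1:ℝ) ≤ Real.sqrt m := by
    rw [show (1:ℝ) = Real.sqrt 1 from Real.sqrt_one.symm]
    exact Real.sqrt_le_sqrt (by exact_mod_cast hm)
  have hs0 : (0:ℝ) < Real.sqrt m := lt_of_lt_of_le one_pos hs1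
  set t : ℝ := Real.sqrt m * ‖x‖ with ht_def
  have ht : 0 < t := mul_pos hs0 hx0
  set δ : ℝ := (2*‖x‖)⁻¹ with hδ_def
  have hδ0 : 0 < δ := by positivity
  have hδhalf : δ ≤ 1/2 := by
    rw [hδ_def]
    rw [inv_le_comm₀ (by positivity) (by norm_num)]
    · linarith
  set r : ℝ := (8*t)⁻¹ with hr_def
  have hr0 : 0 < r := by positivity
  have hrδ : r ≤ δ/4 := by
    rw [hr_def, hδ_def, ht_def]
    rw [div_eq_mul_inv, ← mul_inv]
    apply inv_anti₀ (by positivity)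
    nlinarith
  set u : EuclideanSpace ℝ (Fin n) := t⁻¹ • x with hu_def
  have hu_norm : ‖u‖ = (Real.sqrt m)⁻¹ := by
    rw [hu_def, norm_smul, Real.norm_eq_abs, abs_of_pos (inv_pos.mpr ht), ht_def,
      mul_inv, mul_assoc, inv_mul_cancel₀ hx0.ne', mul_one]
  set z : EuclideanSpace ℝ (Fin m × Fin n) := (1 - δ) • stack n m u with hz_def
  have hz_norm : ‖z‖ = 1 - δ := by
    rw [hz_def, norm_smul, norm_stack, hu_norm, Real.norm_eq_abs,
      abs_of_pos (by linarith), mul_inv_cancel₀ hs0.ne', mul_one]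
  -- pointwise facts on the small ball
  have hsub : Metric.ball z r ⊆ Metric.ball (0:EuclideanSpace ℝ (Fin m × Fin n)) 1 := by
    intro y hy
    rw [Metric.mem_ball, dist_eq_norm] at hy
    rw [Metric.mem_ball, dist_zero_right]
    calc ‖y‖ = ‖z + (y - z)‖ := by rw [show z + (y - z) = y by abel]
    _ ≤ ‖z‖ + ‖y - z‖ := norm_add_le _ _
    _ < (1 - δ) + r := by rw [hz_norm]; linarith
    _ < 1 := by linarith
  have hy_facts : ∀ y ∈ Metric.ball z r, (0:ℝ) < 1 - ‖y‖^2 ∧ 1 - ‖y‖^2 ≤ 2*‖x‖⁻¹ := by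
    intro y hy
    have h1 : ‖y‖ < 1 := by
      have := hsub hy
      rwa [Metric.mem_ball, dist_zero_right] at this
    have h2 : 1 - δ - r ≤ ‖y‖ := by
      have hzy : ‖z - y‖ < r := by
        rw [Metric.mem_ball, dist_eq_norm, ← norm_sub_rev] at hy; exact hy
      have := norm_sub_norm_le z y
      rw [hz_norm] at this
      linarith
    have h3 : (0:ℝ) ≤ ‖y‖ := norm_nonneg _
    have hδx : δ = (2*‖x‖)⁻¹ := rfl
    constructor
    · nlinarith
    · have h4 : 1 - ‖y‖ ≤ 2*δ := by linarith
      have h5 : δ * ‖x‖ = 2⁻¹ := by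
        rw [hδ_def]
        field_simp
      have h6 : 2*δ = ‖x‖⁻¹ := by
        field_simp at h5 ⊢
        linarith
      nlinarith [inv_pos.mpr hx0]
  have hchi : ∀ y ∈ Metric.ball z r, ∀ i : Fin m,
      x - t • block y i ∈ Metric.ball (0:EuclideanSpace ℝ (Fin n)) 1 := by
    intro y hy i
    rw [mem_ball_zero_iff]
    have hxtu : x - t • block y i = t • (u - block y i) := by
      rw [smul_sub, hu_def, smul_smul, mul_inv_cancel₀ ht.ne', one_smul]
    have hbz : block z i = (1 - δ) • u := rfl
    have hδu : u - (1-δ) • u = δ • u := by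
      rw [sub_smul, one_smul]; abel
    have hub : ‖u - block z i‖ = δ * (Real.sqrt m)⁻¹ := by
      rw [hbz, hδu, norm_smul, Real.norm_eq_abs, abs_of_pos hδ0, hu_norm]
    have hby : ‖block z i - block y i‖ < r := by
      have h1 : block z i - block y i = block (z - y) i := rfl
      have h2 := norm_block_le (z - y) i
      rw [Metric.mem_ball, dist_eq_norm, ← norm_sub_rev] at hy
      rw [h1]; exact lt_of_le_of_lt h2 hy
    have htri : ‖u - block y i‖ ≤ ‖u - block z i‖ + ‖block z i - block y i‖ := by
      have : u - block y i = (u - block z i) + (block z i - block y i) := by abel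
      rw [this]; exact norm_add_le _ _
    have e1 : t * (δ * (Real.sqrt m)⁻¹) = 1/2 := by
      rw [ht_def, hδ_def]
      field_simp
    have e2 : t * r = 1/8 := by
      rw [hr_def, mul_inv, ← mul_assoc, mul_comm t, mul_assoc, mul_inv_cancel₀ ht.ne']
      norm_num
    calc ‖x - t • block y i‖ = t * ‖u - block y i‖ := by
          rw [hxtu, norm_smul, Real.norm_eq_abs, abs_of_pos ht]
    _ ≤ t * (δ * (Real.sqrt m)⁻¹ + r) := by
          apply mul_le_mul_of_nonneg_left _ ht.le
          rw [← hub]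
          exact htri.trans (by linarith)
    _ = 1/2 + 1/8 := by rw [mul_add, e1, e2]
    _ < 1 := by norm_num
  -- integral chain
  haveI : Nonempty (Fin m × Fin n) := ⟨(⟨0, hm⟩, ⟨0, by omega⟩)⟩
  haveI : Nontrivial (EuclideanSpace ℝ (Fin m × Fin n)) := by infer_instance
  have hD : Module.finrank ℝ (EuclideanSpace ℝ (Fin m × Fin n)) = m * n := by
    simp [finrank_euclideanSpace]
  set V : ℝ≥0∞ := volume (Metric.ball (0:EuclideanSpace ℝ (Fin m × Fin n)) 1) with hV_def
  have hVfin : V ≠ ⊤ := measure_ball_lt_top.ne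
  have hv0 : 0 < V.toReal :=
    ENNReal.toReal_pos (Metric.measure_ball_pos volume _ one_pos).ne' hVfin
  have hVv : V = ENNReal.ofReal V.toReal := (ENNReal.ofReal_toReal hVfin).symm
  have hball : volume (Metric.ball z r) = ENNReal.ofReal (r ^ (m*n)) * V := by
    rw [Measure.addHaar_ball volume z hr0.le, hD]
  have eA : (2*‖x‖⁻¹) ^ (-α) = 2^(-α) * ‖x‖^α := by
    rw [Real.mul_rpow (by norm_num) (by positivity), Real.inv_rpow hx0.le,
      Real.rpow_neg hx0.le, inv_inv]
  have e8t : 8 * t = (8 * Real.sqrt m) * ‖x‖ := by rw [ht_def]; ring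
  have eB : r ^ (m*n) = (8*Real.sqrt m)^(-((m*n:ℕ):ℝ)) * ‖x‖^(-((m*n:ℕ):ℝ)) := by
    rw [Real.rpow_neg (by positivity), Real.rpow_natCast, Real.rpow_neg hx0.le,
      Real.rpow_natCast, hr_def, e8t, mul_inv, mul_pow, inv_pow, inv_pow]
  have eC : ‖x‖^α * ‖x‖^(-((m*n:ℕ):ℝ)) = ‖x‖^(α - ((m*n:ℕ):ℝ)) := by
    rw [← Real.rpow_add hx0]; ring_nf
  have ereal : (2:ℝ)^(-α) * (8*Real.sqrt m)^(-((m*n:ℕ):ℝ)) * V.toReal * ‖x‖ ^ (α - ((m*n:ℕ):ℝ))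
      = (2*‖x‖⁻¹) ^ (-α) * (r ^ (m*n) * V.toReal) := by
    rw [eA, eB, ← eC]; ring
  calc ENNReal.ofReal ((2:ℝ)^(-α) * (8*Real.sqrt m)^(-((m*n:ℕ):ℝ)) * V.toReal *
        ‖x‖ ^ (α - ((m*n:ℕ):ℝ)))
      = ENNReal.ofReal ((2*‖x‖⁻¹) ^ (-α)) * volume (Metric.ball z r) := by
        have hcomb : ENNReal.ofReal ((2*‖x‖⁻¹)^(-α)) *
            (ENNReal.ofReal (r^(m*n)) * ENNReal.ofReal V.toReal)
            = ENNReal.ofReal ((2*‖x‖⁻¹)^(-α) * (r^(m*n) * V.toReal)) := by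
          rw [← ENNReal.ofReal_mul (by positivity), ← ENNReal.ofReal_mul (by positivity)]
        rw [hball]
        conv_rhs => rw [hVv]
        rw [hcomb, ereal]
  _ = ∫⁻ _ in Metric.ball z r, ENNReal.ofReal ((2*‖x‖⁻¹) ^ (-α)) :=
        (setLIntegral_const _ _).symm
  _ ≤ ∫⁻ y in Metric.ball z r,
        (∏ i, (‖chiBall n (x - t • block y i)‖₊ : ℝ≥0∞)) *
          ENNReal.ofReal ((1 - ‖y‖ ^ 2) ^ (-α)) := by
        apply setLIntegral_mono' measurableSet_ball
        intro y hy
        obtain ⟨hpos, hle⟩ := hy_facts y hy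
        have hprod : (∏ i, (‖chiBall n (x - t • block y i)‖₊ : ℝ≥0∞)) = 1 := by
          apply Finset.prod_eq_one
          intro i _
          rw [chiBall, Set.indicator_of_mem (hchi y hy i)]
          simp
        rw [hprod, one_mul]
        exact ENNReal.ofReal_le_ofReal
          (Real.rpow_le_rpow_of_nonpos hpos hle (neg_nonpos.mpr hα0))
  _ ≤ ∫⁻ y in Metric.ball (0:EuclideanSpace ℝ (Fin m × Fin n)) 1,
        (∏ i, (‖chiBall n (x - t • block y i)‖₊ : ℝ≥0∞)) *
          ENNReal.ofReal ((1 - ‖y‖ ^ 2) ^ (-α)) := lintegral_mono_set hsub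

/-- Lower bound and sharpness: for `f₁ = ⋯ = f_m = χ_{Bⁿ}` there are `C, R > 0` with
`S^m_α(f₁,...,f_m)(x) ≥ C|x|^{-(mn-α)}` for `|x| ≥ R`; consequently
`S^m_α(χ_{Bⁿ},...,χ_{Bⁿ}) ∉ L^p(ℝⁿ)` whenever `p ≤ n/(mn-α)`. -/
theorem fracSphMax_lower_bound {n m : ℕ} (hn : 2 ≤ n) (hm : 1 ≤ m) (α : ℝ)
    (hα0 : 0 ≤ α) (hα1 : α < 1) :
    (∃ C > (0 : ℝ), ∃ R > (0 : ℝ), ∀ x : EuclideanSpace ℝ (Fin n), R ≤ ‖x‖ →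
        ENNReal.ofReal (C * ‖x‖ ^ (-((m * n : ℕ) - α : ℝ))) ≤
          fracSphMaxSup (m := m) α (fun _ => chiBall n) x) ∧
      ∀ p : ℝ, 0 < p → p ≤ (n : ℝ) / ((m * n : ℕ) - α) →
        ∫⁻ x : EuclideanSpace ℝ (Fin n), fracSphMaxSup (m := m) α (fun _ => chiBall n) x ^ p = ⊤ := by
  have hD2 : 2 ≤ m * n := le_trans hn (Nat.le_mul_of_pos_left n hm)
  have hD0 : (0:ℝ) < ((m*n:ℕ):ℝ) := by
    have : 0 < m * n := by omega
    exact_mod_cast this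
  have hs1 : (1:ℝ) ≤ Real.sqrt m := by
    rw [show (1:ℝ) = Real.sqrt 1 from Real.sqrt_one.symm]
    exact Real.sqrt_le_sqrt (by exact_mod_cast hm)
  have hs0 : (0:ℝ) < Real.sqrt m := lt_of_lt_of_le one_pos hs1
  have hω : 0 < omegaConst (m * n) := by
    unfold omegaConst
    apply div_pos (by positivity)
    exact Real.Gamma_pos_of_pos (by have := hD0; push_cast at this ⊢; linarith)
  have hB : 0 < betaG ((m * n : ℕ) / 2 : ℝ) (1 - α) := by
    unfold betaG
    exact div_pos (mul_pos (Real.Gamma_pos_of_pos (by linarith))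
        (Real.Gamma_pos_of_pos (by linarith)))
      (Real.Gamma_pos_of_pos (by linarith))
  set K : ℝ := 2 / (omegaConst (m * n) * betaG ((m * n : ℕ) / 2 : ℝ) (1 - α)) with hK_def
  have hK : 0 < K := by positivity
  haveI : Nonempty (Fin m × Fin n) := ⟨(⟨0, hm⟩, ⟨0, by omega⟩)⟩
  set v : ℝ := (volume (Metric.ball (0:EuclideanSpace ℝ (Fin m × Fin n)) 1)).toReal with hv_def
  have hv0 : 0 < v := ENNReal.toReal_pos
    (Metric.measure_ball_pos volume _ one_pos).ne' measure_ball_lt_top.ne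
  set C : ℝ := K * ((2:ℝ)^(-α) * (8*Real.sqrt m)^(-((m*n:ℕ):ℝ)) * v) with hC_def
  have hC : 0 < C := by positivity
  have hmain : ∀ x : EuclideanSpace ℝ (Fin n), 1 ≤ ‖x‖ →
      ENNReal.ofReal (C * ‖x‖ ^ (-((m * n : ℕ) - α : ℝ))) ≤
        fracSphMaxSup (m := m) α (fun _ => chiBall n) x := by
    intro x hx
    have hx0 : (0:ℝ) < ‖x‖ := lt_of_lt_of_le one_pos hx
    have ht0 : (0:ℝ) < Real.sqrt m * ‖x‖ := mul_pos hs0 hx0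
    unfold fracSphMaxSup
    refine le_trans ?_ (mul_le_mul_right
      (le_iSup₂ (f := fun (t : ℝ) (_ : t > 0) =>
        ∫⁻ y in Metric.ball (0 : EuclideanSpace ℝ (Fin m × Fin n)) 1,
          (∏ i, (‖(fun _ => chiBall n) i (x - t • block y i)‖₊ : ℝ≥0∞)) *
            ENNReal.ofReal ((1 - ‖y‖ ^ 2) ^ (-α))) (Real.sqrt m * ‖x‖) ht0) _)
    have hkey := key_integral hn hm hα0 x hx
    calc ENNReal.ofReal (C * ‖x‖ ^ (-((m * n : ℕ) - α : ℝ)))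
        = ENNReal.ofReal K * ENNReal.ofReal
            ((2:ℝ)^(-α) * (8*Real.sqrt m)^(-((m*n:ℕ):ℝ)) * v * ‖x‖ ^ (α - ((m*n:ℕ):ℝ))) := by
          rw [← ENNReal.ofReal_mul hK.le]
          congr 1
          rw [neg_sub, hC_def]
          ring
    _ ≤ ENNReal.ofReal K * ∫⁻ y in Metric.ball (0 : EuclideanSpace ℝ (Fin m × Fin n)) 1,
          (∏ i, (‖(fun _ => chiBall n) i (x - (Real.sqrt m * ‖x‖) • block y i)‖₊ : ℝ≥0∞)) *
            ENNReal.ofReal ((1 - ‖y‖ ^ 2) ^ (-α)) := by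
          exact mul_le_mul_right hkey _
  refine ⟨⟨C, hC, 1, one_pos, hmain⟩, ?_⟩
  intro p hp hple
  set β : ℝ := ((m*n:ℕ):ℝ) - α with hβ_def
  have hD2' : (2:ℝ) ≤ ((m*n:ℕ):ℝ) := by exact_mod_cast hD2
  have hβ : 0 < β := by rw [hβ_def]; linarith
  have hs : β * p ≤ (n:ℝ) := by
    have := (le_div_iff₀ hβ).mp hple
    linarith
  haveI : Nonempty (Fin n) := ⟨⟨0, by omega⟩⟩
  have hDF : Module.finrank ℝ (EuclideanSpace ℝ (Fin n)) = n := by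
    simp [finrank_euclideanSpace]
  set vF : ℝ := (volume (Metric.ball (0:EuclideanSpace ℝ (Fin n)) 1)).toReal with hvF_def
  have hvF0 : 0 < vF := ENNReal.toReal_pos
    (Metric.measure_ball_pos volume _ one_pos).ne' measure_ball_lt_top.ne
  have hVFv : volume (Metric.ball (0:EuclideanSpace ℝ (Fin n)) 1) = ENNReal.ofReal vF :=
    (ENNReal.ofReal_toReal measure_ball_lt_top.ne).symm
  set A : ℕ → Set (EuclideanSpace ℝ (Fin n)) :=
    fun k => Metric.ball 0 (2*(2^k*1)) \ Metric.ball 0 (2^k*1) with hA_def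
  have hq1 : ∀ k : ℕ, (1:ℝ) ≤ 2^k*1 := by
    intro k
    rw [mul_one]
    exact one_le_pow₀ (by norm_num)
  have hmem : ∀ k : ℕ, ∀ a ∈ A k, 2^k*1 ≤ ‖a‖ ∧ ‖a‖ < 2*(2^k*1) := by
    intro k a ha
    obtain ⟨h1, h2⟩ := ha
    rw [mem_ball_zero_iff] at h1
    have h2' : ¬ ‖a‖ < 2^k*1 := by simpa [mem_ball_zero_iff] using h2
    exact ⟨not_lt.mp h2', h1⟩
  have hAmeas : ∀ k, MeasurableSet (A k) := fun k =>
    measurableSet_ball.diff measurableSet_ball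
  have hdisj : Pairwise (Function.onFun Disjoint A) := by
    have key : ∀ k l, k < l → Disjoint (A k) (A l) := by
      intro k l hkl
      rw [Set.disjoint_left]
      intro a hak hal
      have h1 := (hmem k a hak).2
      have h2 := (hmem l a hal).1
      have h3 : (2:ℝ)^(k+1) ≤ 2^l := pow_le_pow_right₀ (by norm_num) hkl
      have h4 : (2:ℝ)*(2^k*1) = 2^(k+1)*1 := by ring
      linarith
    intro k l hkl
    rcases hkl.lt_or_gt with h|h
    exacts [key k l h, (key l k h).symm]
  have hmeasA : ∀ k : ℕ, volume (A k) =
      ENNReal.ofReal (((2*(2^k*1))^n - (2^k*1)^n) * vF) := by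
    intro k
    have hqpos : (0:ℝ) < 2^k*1 := lt_of_lt_of_le one_pos (hq1 k)
    have hsub : Metric.ball (0:EuclideanSpace ℝ (Fin n)) (2^k*1) ⊆
        Metric.ball 0 (2*(2^k*1)) := Metric.ball_subset_ball (by linarith)
    rw [hA_def]
    rw [measure_diff hsub measurableSet_ball.nullMeasurableSet measure_ball_lt_top.ne,
      Measure.addHaar_ball volume _ (by linarith : (0:ℝ) ≤ 2*(2^k*1)),
      Measure.addHaar_ball volume _ hqpos.le, hDF, hVFv,
      ← ENNReal.ofReal_mul (by positivity), ← ENNReal.ofReal_mul (by positivity),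
      ← ENNReal.ofReal_sub _ (by positivity)]
    congr 1
    ring
  set g : EuclideanSpace ℝ (Fin n) → ℝ≥0∞ :=
    fun a => (ENNReal.ofReal (C * ‖a‖ ^ (-β)))^p with hg_def
  have h2n : (1:ℝ) < 2^n := one_lt_pow₀ (by norm_num) (by omega)
  set εr : ℝ := C^p * (2:ℝ)^(-(β*p)) * ((2:ℝ)^n - 1) * vF with hεr_def
  have hεr0 : 0 < εr := by
    rw [hεr_def]
    have h1 : (0:ℝ) < C^p := Real.rpow_pos_of_pos hC _
    have h2 : (0:ℝ) < (2:ℝ)^(-(β*p)) := Real.rpow_pos_of_pos (by norm_num) _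
    have h3 : (0:ℝ) < (2:ℝ)^n - 1 := by linarith
    exact mul_pos (mul_pos (mul_pos h1 h2) h3) hvF0
  have step : ∀ k : ℕ, ENNReal.ofReal εr ≤ ∫⁻ a in A k, g a := by
    intro k
    set q : ℝ := 2^k*1 with hq_def
    have hqpos : (0:ℝ) < q := lt_of_lt_of_le one_pos (hq1 k)
    have h2q : (0:ℝ) < 2*q := by linarith
    -- real inequality
    have e1 : (C*(2*q)^(-β))^p = C^p * (2*q)^(-(β*p)) := by
      rw [Real.mul_rpow hC.le (Real.rpow_nonneg h2q.le _), ← Real.rpow_mul h2q.le, neg_mul]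
    have e2 : ((2:ℝ)*q)^(-(β*p)) = 2^(-(β*p)) * q^(-(β*p)) :=
      Real.mul_rpow (by norm_num) hqpos.le
    have e4 : (1:ℝ) ≤ q^(-(β*p)) * q^(n:ℕ) := by
      have eq1 : q^(-(β*p)) * q^(n:ℕ) = q^((n:ℝ) - β*p) := by
        rw [← Real.rpow_natCast q n, ← Real.rpow_add hqpos]
        ring_nf
      rw [eq1]
      calc (1:ℝ) = q^(0:ℝ) := (Real.rpow_zero q).symm
      _ ≤ q^((n:ℝ)-β*p) := Real.rpow_le_rpow_of_exponent_le (hq1 k) (by linarith)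
    have hRkey : εr ≤ (C*(2*q)^(-β))^p * (((2*q)^n - q^n) * vF) := by
      have hfac : ((2:ℝ)*q)^n - q^n = q^n * ((2:ℝ)^n - 1) := by rw [mul_pow]; ring
      have h1 : (0:ℝ) < C^p := Real.rpow_pos_of_pos hC _
      have h2 : (0:ℝ) < (2:ℝ)^(-(β*p)) := Real.rpow_pos_of_pos (by norm_num) _
      calc εr = εr * 1 := (mul_one _).symm
      _ ≤ εr * (q^(-(β*p)) * q^(n:ℕ)) := by
          apply mul_le_mul_of_nonneg_left e4 hεr0.le
      _ = (C*(2*q)^(-β))^p * (((2*q)^n - q^n) * vF) := by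
          rw [e1, e2, hfac, hεr_def]
          ring
    calc ENNReal.ofReal εr ≤ ENNReal.ofReal ((C*(2*q)^(-β))^p * (((2*q)^n - q^n) * vF)) :=
          ENNReal.ofReal_le_ofReal hRkey
    _ = (ENNReal.ofReal (C*(2*q)^(-β)))^p * volume (A k) := by
        rw [hmeasA k, ← hq_def, ENNReal.ofReal_mul (by positivity),
          ENNReal.ofReal_rpow_of_pos (by positivity)]
    _ = ∫⁻ _ in A k, (ENNReal.ofReal (C*(2*q)^(-β)))^p := (setLIntegral_const _ _).symm
    _ ≤ ∫⁻ a in A k, g a := by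
        apply setLIntegral_mono' (hAmeas k)
        intro a ha
        obtain ⟨hal, hau⟩ := hmem k a ha
        rw [← hq_def] at hal hau
        have ha0 : (0:ℝ) < ‖a‖ := lt_of_lt_of_le hqpos hal
        apply ENNReal.rpow_le_rpow _ hp.le
        apply ENNReal.ofReal_le_ofReal
        apply mul_le_mul_of_nonneg_left _ hC.le
        exact Real.rpow_le_rpow_of_nonpos ha0 hau.le (by linarith)
  have hbig : (⊤:ℝ≥0∞) ≤ ∫⁻ x, fracSphMaxSup (m := m) α (fun _ => chiBall n) x ^ p := by
    calc (⊤:ℝ≥0∞) = ∑' _ : ℕ, ENNReal.ofReal εr :=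
          (ENNReal.tsum_const_eq_top_of_ne_zero (ENNReal.ofReal_pos.mpr hεr0).ne').symm
    _ ≤ ∑' k, ∫⁻ a in A k, g a := ENNReal.tsum_le_tsum step
    _ = ∫⁻ a in ⋃ k, A k, g a := (lintegral_iUnion hAmeas hdisj g).symm
    _ ≤ ∫⁻ a in ⋃ k, A k, fracSphMaxSup (m := m) α (fun _ => chiBall n) a ^ p := by
        apply setLIntegral_mono' (MeasurableSet.iUnion hAmeas)
        intro a ha
        obtain ⟨k, hak⟩ := Set.mem_iUnion.mp ha
        have h1 : (1:ℝ) ≤ ‖a‖ := le_trans (hq1 k) (hmem k a hak).1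
        exact ENNReal.rpow_le_rpow (hmain a h1) hp.le
    _ ≤ ∫⁻ x, fracSphMaxSup (m := m) α (fun _ => chiBall n) x ^ p :=
        setLIntegral_le_lintegral _ _
  exact top_le_iff.mp hbig
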